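/- Let T be an infinite locally finite tree rooted at r and λ > br T, where br T is the branching number of T. Then T satisfies f_n-containment with f_n = ⌊λ^n⌋. Consequently λ_c(T) ≤ br T. -/

import Mathlib

open scoped ENNReal NNReal

namespace Firefight

variable {V : Type*}

/-- Vertices protected before round `n+1`'s spread: the strategy `s` plays `s n` in round `n+1`. -/
def protSet (s : ℕ → Set V) : ℕ → Set V
  | 0 => ∅
  | n + 1 => protSet s n ∪ s n

/-- Burning vertices after `n` rounds. -/
def burnSet (G : SimpleGraph V) (X₀ : Set V) (s : ℕ → Set V) : ℕ → Set V
  | 0 => X₀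
  | n + 1 => burnSet G X₀ s n ∪
      {v | v ∉ protSet s (n + 1) ∧ ∃ u ∈ burnSet G X₀ s n, G.Adj u v}

/-- A strategy is valid for the budget sequence `f` if in round `n+1` it protects at most
`f (n+1)` vertices, none of which is already burning. -/
def ValidStrategy (G : SimpleGraph V) (f : ℕ → ℕ) (X₀ : Set V) (s : ℕ → Set V) : Prop :=
  ∀ n, (s n).Finite ∧ (s n).ncard ≤ f (n + 1) ∧ Disjoint (s n) (burnSet G X₀ s n)

/-- The fire is contained: only finitely many vertices ever burn. -/
def ContainsFire (G : SimpleGraph V) (X₀ : Set V) (s : ℕ → Set V) : Prop :=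
  (⋃ n, burnSet G X₀ s n).Finite

/-- `G` satisfies `f_n`-containment. -/
def Containment (G : SimpleGraph V) (f : ℕ → ℕ) : Prop :=
  ∀ X₀ : Set V, X₀.Finite → ∃ s, ValidStrategy G f X₀ s ∧ ContainsFire G X₀ s

/-- Exponential containment of rate `lam`: `f_n`-containment for some `f_n = O(lam ^ n)`. -/
def ExpContainment (G : SimpleGraph V) (lam : ℝ≥0∞) : Prop :=
  ∃ f : ℕ → ℕ, (∃ c : ℝ≥0, ∀ n, (f n : ℝ≥0∞) ≤ c * lam ^ n) ∧ Containment G f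

/-- The critical exponential containment rate. -/
noncomputable def lambdaC (G : SimpleGraph V) : ℝ≥0∞ :=
  sInf {lam | ExpContainment G lam}

/-- A set of edges whose removal leaves the root `r` in a finite component. -/
def IsCutset (G : SimpleGraph V) (r : V) (Cut : Set (Sym2 V)) : Prop :=
  Cut ⊆ G.edgeSet ∧ {v | (G.deleteEdges Cut).Reachable r v}.Finite

/-- The distance `|e|` of an edge from the root: the distance to its farther endpoint. -/
noncomputable def edgeDist (G : SimpleGraph V) (r : V) (e : Sym2 V) : ℕ :=
  Sym2.lift ⟨fun a b => max (G.dist r a) (G.dist r b), fun a b => max_comm _ _⟩ e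

/-- `∑_{e ∈ Cut} lam ^ {-|e|}`. -/
noncomputable def cutsetWeight (G : SimpleGraph V) (r : V) (lam : ℝ≥0∞)
    (Cut : Set (Sym2 V)) : ℝ≥0∞ :=
  ∑' e : Cut, (lam ^ edgeDist G r (e : Sym2 V))⁻¹

/-- The branching number of a tree rooted at `r`. -/
noncomputable def branchingNumber (G : SimpleGraph V) (r : V) : ℝ≥0∞ :=
  sSup {lam : ℝ≥0∞ | ∃ ε : ℝ≥0∞, 0 < ε ∧ ∀ Cut, IsCutset G r Cut → ε ≤ cutsetWeight G r lam Cut}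

/-- The ball of radius `k` about `r`. -/
def ball (G : SimpleGraph V) (r : V) (k : ℕ) : Set V :=
  {v | G.dist r v ≤ k}

end Firefight

open Firefight

section Aux

variable {V : Type*}

/-- predecessor on a geodesic -/
lemma exists_adj_dist_pred (T : SimpleGraph V) (hc : T.Connected) {r v : V}
    (h : 0 < T.dist r v) : ∃ u, T.Adj u v ∧ T.dist r u + 1 = T.dist r v := by
  obtain ⟨p, hp⟩ := (hc r v).exists_walk_length_eq_dist
  cases hq : p.reverse with
  | nil =>
    exfalso
    have : p.length = 0 := by
      have := congrArg SimpleGraph.Walk.length hq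
      simpa using this
    omega
  | cons hadj q =>
    rename_i u2
    refine ⟨u2, hadj.symm, ?_⟩
    have hlen : q.length + 1 = p.length := by
      have := congrArg SimpleGraph.Walk.length hq
      simp at this
      omega
    have h1 : T.dist r u2 ≤ q.length := by
      have := SimpleGraph.dist_le q.reverse
      simpa [SimpleGraph.dist_comm] using this
    have h2 : T.dist r v ≤ T.dist r u2 + 1 := by
      calc T.dist r v ≤ T.dist r u2 + T.dist u2 v := hc.dist_triangle
        _ ≤ T.dist r u2 + 1 := by
            have : T.dist u2 v = 1 := (SimpleGraph.dist_eq_one_iff_adj).2 hadj.symm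
            omega
    omega

lemma adj_dist_le (T : SimpleGraph V) (hc : T.Connected) {r u v : V} (h : T.Adj u v) :
    T.dist r v ≤ T.dist r u + 1 := by
  calc T.dist r v ≤ T.dist r u + T.dist u v := hc.dist_triangle
    _ ≤ T.dist r u + 1 := by
        have : T.dist u v = 1 := (SimpleGraph.dist_eq_one_iff_adj).2 h
        omega

lemma ball_finite (T : SimpleGraph V) (hlf : T.LocallyFinite) (hc : T.Connected) (r : V) :
    ∀ k, (ball T r k).Finite := by
  intro k
  induction k with
  | zero =>
    apply Set.Finite.subset (Set.finite_singleton r)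
    intro v hv
    simp only [ball, Set.mem_setOf_eq, Nat.le_zero] at hv
    have := (hc.dist_eq_zero_iff (u := r) (v := v)).1 hv
    simp [this]
  | succ k ih =>
    have : ball T r (k+1) ⊆ ball T r k ∪ ⋃ u ∈ ball T r k, (T.neighborSet u) := by
      intro v hv
      simp only [ball, Set.mem_setOf_eq] at hv
      rcases Nat.lt_or_ge (T.dist r v) (k+1) with h | h
      · exact Or.inl (by simpa [ball] using Nat.lt_succ_iff.mp h)
      · have hd : T.dist r v = k + 1 := le_antisymm hv h
        obtain ⟨u, hadj, hu⟩ := exists_adj_dist_pred T hc (r := r) (v := v) (by omega)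
        refine Or.inr ?_
        refine Set.mem_biUnion (show u ∈ ball T r k by simp [ball]; omega) ?_
        exact hadj
    refine Set.Finite.subset (ih.union (ih.biUnion (fun u _ => ?_))) this
    have := hlf u
    exact (T.neighborSet u).toFinite

lemma edgeDist_mk (T : SimpleGraph V) (r a b : V) :
    edgeDist T r s(a, b) = max (T.dist r a) (T.dist r b) := rfl

lemma reach_del (T : SimpleGraph V) (hc : T.Connected) (r : V) (Cut : Set (Sym2 V)) (m : ℕ)
    (hcut : ∀ e ∈ Cut, m < edgeDist T r e) :
    ∀ v, T.dist r v ≤ m → (T.deleteEdges Cut).Reachable r v := by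
  suffices H : ∀ k, ∀ v, T.dist r v = k → k ≤ m → (T.deleteEdges Cut).Reachable r v by
    intro v hv; exact H _ v rfl hv
  intro k
  induction k with
  | zero =>
    intro v hv _
    have := (hc.dist_eq_zero_iff (u := r) (v := v)).1 hv
    exact this ▸ SimpleGraph.Reachable.refl r
  | succ k ih =>
    intro v hv hk
    obtain ⟨u, hadj, hu⟩ := exists_adj_dist_pred T hc (r := r) (v := v) (by omega)
    have hru : T.dist r u = k := by omega
    have hreach : (T.deleteEdges Cut).Reachable r u := ih u hru (by omega)
    have hnotin : s(u, v) ∉ Cut := by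
      intro hmem
      have := hcut _ hmem
      rw [edgeDist_mk] at this
      omega
    exact hreach.trans ((SimpleGraph.deleteEdges_adj.2 ⟨hadj, hnotin⟩).reachable)


lemma one_le_br (T : SimpleGraph V) [Infinite V] (hc : T.Connected) (r : V) :
    1 ≤ branchingNumber T r := by
  apply le_sSup
  refine ⟨1, one_pos, fun Cut hCut => ?_⟩
  have hne : Cut.Nonempty := by
    rcases Cut.eq_empty_or_nonempty with h | h
    · exfalso
      obtain ⟨-, hfin⟩ := hCut
      rw [h, SimpleGraph.deleteEdges_empty] at hfin
      have huniv : {v | T.Reachable r v} = Set.univ := by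
        ext v; simpa using hc.preconnected r v
      rw [huniv] at hfin
      exact Set.infinite_univ hfin
    · exact h
  obtain ⟨e, he⟩ := hne
  have := ENNReal.le_tsum (f := fun e : Cut => ((1 : ℝ≥0∞) ^ edgeDist T r (e : Sym2 V))⁻¹) ⟨e, he⟩
  simpa [cutsetWeight] using this

lemma exists_small_cutset (T : SimpleGraph V) (r : V) {lam : ℝ≥0∞}
    (h : branchingNumber T r < lam) {ε : ℝ≥0∞} (hε : 0 < ε) :
    ∃ Cut, IsCutset T r Cut ∧ cutsetWeight T r lam Cut < ε := by
  by_contra hcon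
  push_neg at hcon
  have hmem : lam ∈ {lam : ℝ≥0∞ | ∃ ε : ℝ≥0∞, 0 < ε ∧
      ∀ Cut, IsCutset T r Cut → ε ≤ cutsetWeight T r lam Cut} :=
    ⟨ε, hε, fun Cut hC => hcon Cut hC⟩
  exact absurd (le_sSup hmem) (not_le.2 h)

lemma endpoints_finite_card (E : Set (Sym2 V)) (hE : E.Finite) :
    {v | ∃ e ∈ E, v ∈ e}.Finite ∧ {v | ∃ e ∈ E, v ∈ e}.ncard ≤ 2 * E.ncard := by
  refine Set.Finite.induction_on
    (motive := fun E _ => {v | ∃ e ∈ E, v ∈ e}.Finite ∧ {v | ∃ e ∈ E, v ∈ e}.ncard ≤ 2 * E.ncard)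
    E hE (by simp) ?_
  clear hE E
  · intro e₀ E he₀ hE ih
    have hsplit : {v | ∃ e ∈ insert e₀ E, v ∈ e} =
        {v | v ∈ e₀} ∪ {v | ∃ e ∈ E, v ∈ e} := by
      ext v; aesop
    have he₀fin : {v | v ∈ e₀}.Finite ∧ {v | v ∈ e₀}.ncard ≤ 2 := by
      induction e₀ with
      | _ a b =>
        constructor
        · apply Set.Finite.subset ((Set.finite_singleton b).insert a)
          intro v hv
          simp only [Set.mem_setOf_eq, Sym2.mem_iff] at hv
          simpa using hv
        · have : {v | v ∈ (s(a, b) : Sym2 V)} = {a, b} := by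
            ext v; simp [Sym2.mem_iff]
          rw [this]
          exact (Set.ncard_insert_le a {b}).trans (by simp)
    rw [hsplit]
    refine ⟨he₀fin.1.union ih.1, ?_⟩
    calc ({v | v ∈ e₀} ∪ {v | ∃ e ∈ E, v ∈ e}).ncard
        ≤ {v | v ∈ e₀}.ncard + {v | ∃ e ∈ E, v ∈ e}.ncard :=
          Set.ncard_union_le _ _
      _ ≤ 2 + 2 * E.ncard := by have := he₀fin.2; have := ih.2; omega
      _ ≤ 2 * (insert e₀ E).ncard := by
          rw [Set.ncard_insert_of_notMem he₀ hE]; omega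

end Aux

section Main

variable {V : Type*}

lemma protSet_mono (st : ℕ → Set V) : ∀ {m n : ℕ}, m ≤ n → protSet st m ⊆ protSet st n := by
  intro m n h
  induction n with
  | zero =>
    have hm0 : m = 0 := Nat.le_zero.1 h
    subst hm0
    exact subset_rfl
  | succ n ih =>
    rcases Nat.lt_or_ge m (n+1) with h' | h'
    · exact (ih (by omega)).trans Set.subset_union_left
    · have : m = n + 1 := by omega
      subst this; rfl

lemma edgeDist_le_of_mem (T : SimpleGraph V) (hc : T.Connected) (r : V) {e : Sym2 V} {v : V}
    (he : e ∈ T.edgeSet) (hv : v ∈ e) :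
    T.dist r v ≤ edgeDist T r e ∧ edgeDist T r e ≤ T.dist r v + 1 := by
  induction e with
  | _ a b =>
    rw [SimpleGraph.mem_edgeSet] at he
    rw [Sym2.mem_iff] at hv
    rw [edgeDist_mk]
    rcases hv with rfl | rfl
    · exact ⟨le_max_left _ _, max_le (by omega) (adj_dist_le T hc he)⟩
    · exact ⟨le_max_right _ _, max_le (adj_dist_le T hc he.symm) (by omega)⟩

end Main


/-- for `lam` above the branching number, a tree satisfies
`⌊lam^n⌋`-containment; consequently `λ_c ≤ br T`. -/
theorem stmt_6 {V : Type*} (T : SimpleGraph V) [Infinite V] (hlf : T.LocallyFinite)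
    (ht : T.IsTree) (r : V) :
    (∀ lam : ℝ, branchingNumber T r < ENNReal.ofReal lam →
      Containment T (fun n => ⌊lam ^ n⌋₊)) ∧
    lambdaC T ≤ branchingNumber T r := by
  have hc : T.Connected := ht.isConnected
  have h1br : 1 ≤ branchingNumber T r := one_le_br T hc r
  have main : ∀ lam : ℝ, branchingNumber T r < ENNReal.ofReal lam →
      Containment T (fun n => ⌊lam ^ n⌋₊) := by
    intro lam hlam
    set L : ℝ≥0∞ := ENNReal.ofReal lam with hLdef
    have hL1 : 1 < L := lt_of_le_of_lt h1br hlam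
    have hlam1 : 1 < lam := ENNReal.one_lt_ofReal.1 hL1
    have hlam0 : 0 ≤ lam := by linarith
    have hLtop : L ≠ ⊤ := ENNReal.ofReal_ne_top
    have hL0 : L ≠ 0 := by intro h; rw [h] at hL1; exact (not_lt.2 zero_le_one) hL1
    have hpow0 : ∀ k : ℕ, L ^ k ≠ 0 := fun k => pow_ne_zero k hL0
    have hpowtop : ∀ k : ℕ, L ^ k ≠ ⊤ := fun k => ENNReal.pow_ne_top hLtop
    have hpowle : ∀ {m k : ℕ}, m ≤ k → L ^ m ≤ L ^ k := fun h => pow_le_pow_right' hL1.le h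
    have hpowlt : ∀ {m k : ℕ}, m < k → L ^ m < L ^ k := by
      intro m k h
      have h2 : L ^ m * 1 < L ^ m * L ^ (k - m) := by
        rw [ENNReal.mul_lt_mul_iff_right (hpow0 m) (hpowtop m)]
        exact lt_of_lt_of_le hL1 (le_self_pow₀ hL1.le (by omega))
      rw [mul_one, ← pow_add] at h2
      have : m + (k - m) = k := by omega
      rwa [this] at h2
    intro X₀ hX₀
    obtain ⟨R, hR⟩ : ∃ R : ℕ, ∀ v ∈ X₀, T.dist r v ≤ R := by
      obtain ⟨R, hRb⟩ := (hX₀.image (T.dist r)).bddAbove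
      exact ⟨R, fun v hv => hRb (Set.mem_image_of_mem _ hv)⟩
    set D : ℕ := R + 1 with hD
    set ε : ℝ≥0∞ := (L ^ (D + 1))⁻¹ / 2 with hεdef
    have hε : 0 < ε := ENNReal.div_pos (by simp [hpowtop (D+1)]) (by norm_num)
    obtain ⟨Cut, hCut, hw⟩ := exists_small_cutset T r hlam hε
    have hwle : cutsetWeight T r L Cut ≤ ε := hw.le
    -- all cut edges are far from the root
    have hfar : ∀ e ∈ Cut, D + 2 ≤ edgeDist T r e := by
      intro e he
      have h1 : (L ^ edgeDist T r e)⁻¹ ≤ cutsetWeight T r L Cut :=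
        ENNReal.le_tsum (f := fun e : Cut => (L ^ edgeDist T r (e : Sym2 V))⁻¹) ⟨e, he⟩
      have h2 : (L ^ edgeDist T r e)⁻¹ < (L ^ (D + 1))⁻¹ :=
        lt_of_le_of_lt (h1.trans hwle) (ENNReal.half_lt_self
          (by simp [hpowtop (D+1)]) (ENNReal.inv_ne_top.2 (hpow0 (D+1))))
      have h3 : L ^ (D + 1) < L ^ edgeDist T r e := ENNReal.inv_lt_inv.1 h2
      by_contra hcon
      exact absurd h3 (not_lt.2 (hpowle (by omega)))
    -- the finite slices of the cutset
    set F : ℕ → Set (Sym2 V) := fun d => {e | e ∈ Cut ∧ edgeDist T r e ≤ d} with hFdef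
    have hFd : ∀ d : ℕ, (F d).Finite ∧ ((F d).ncard : ℝ≥0∞) ≤ ε * L ^ d := by
      intro d
      have hν : ((L ^ d)⁻¹ : ℝ≥0∞) ≠ 0 := ENNReal.inv_ne_zero.2 (hpowtop d)
      obtain ⟨hf, hcard⟩ := ENNReal.finset_card_const_le_le_of_tsum_le
        (a := fun e : Cut => (L ^ edgeDist T r (e : Sym2 V))⁻¹)
        (c := ε) (by
          rw [hεdef]
          exact ne_top_of_le_ne_top (ENNReal.inv_ne_top.2 (hpow0 (D+1))) ENNReal.half_le_self)
        hwle hν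
      have himg : F d = Subtype.val ''
          {i : Cut | (L ^ d)⁻¹ ≤ (L ^ edgeDist T r (i : Sym2 V))⁻¹} := by
        ext e
        simp only [hFdef, Set.mem_setOf_eq, Set.mem_image, Subtype.exists, exists_and_right,
          exists_eq_right]
        constructor
        · rintro ⟨he, hle⟩
          exact ⟨he, ENNReal.inv_le_inv.2 (hpowle hle)⟩
        · rintro ⟨he, hle⟩
          refine ⟨he, ?_⟩
          by_contra hcon
          have := hpowlt (show d < edgeDist T r e by omega)
          exact absurd (ENNReal.inv_le_inv.1 hle) (not_le.2 this)
      have hFin : (F d).Finite := by rw [himg]; exact hf.image _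
      refine ⟨hFin, ?_⟩
      have hc1 : (F d).ncard = hf.toFinset.card := by
        rw [himg, Set.ncard_image_of_injective _ Subtype.val_injective,
          Set.ncard_eq_toFinset_card _ hf]
      rw [hc1]
      calc (hf.toFinset.card : ℝ≥0∞) ≤ ε / (L ^ d)⁻¹ := hcard
        _ = ε * L ^ d := by rw [div_eq_mul_inv, inv_inv]
    -- the strategy
    set st : ℕ → Set V := fun n => {v | T.dist r v = D + n ∧ ∃ e ∈ Cut, v ∈ e} with hstdef
    -- basic bound: st n inside endpoints of F (D+n+1)
    have hstsub : ∀ n, st n ⊆ {v | ∃ e ∈ F (D + n + 1), v ∈ e} := by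
      intro n v hv
      obtain ⟨hdist, e, he, hve⟩ := hv
      refine ⟨e, ⟨he, ?_⟩, hve⟩
      have := (edgeDist_le_of_mem T hc r (hCut.1 he) hve).2
      omega
    have hstfin : ∀ n, (st n).Finite := by
      intro n
      exact Set.Finite.subset (endpoints_finite_card _ (hFd (D+n+1)).1).1 (hstsub n)
    have hstcard : ∀ n, ((st n).ncard : ℝ≥0∞) ≤ L ^ n := by
      intro n
      have h1 : (st n).ncard ≤ 2 * (F (D + n + 1)).ncard := by
        calc (st n).ncard ≤ {v | ∃ e ∈ F (D + n + 1), v ∈ e}.ncard :=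
              Set.ncard_le_ncard (hstsub n) (endpoints_finite_card _ (hFd (D+n+1)).1).1
          _ ≤ 2 * (F (D + n + 1)).ncard := (endpoints_finite_card _ (hFd (D+n+1)).1).2
      calc ((st n).ncard : ℝ≥0∞) ≤ ((2 * (F (D + n + 1)).ncard : ℕ) : ℝ≥0∞) := by
            exact_mod_cast Nat.cast_le.2 h1
        _ = 2 * ((F (D + n + 1)).ncard : ℝ≥0∞) := by push_cast; ring
        _ ≤ 2 * (ε * L ^ (D + n + 1)) := by
            exact mul_le_mul_right (hFd (D+n+1)).2 2
        _ = (2 * ε) * L ^ (D + n + 1) := by ring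
        _ = (L ^ (D + 1))⁻¹ * L ^ (D + n + 1) := by
            have h2ε : 2 * ε = (L ^ (D + 1))⁻¹ := by
              rw [hεdef]
              exact ENNReal.mul_div_cancel' (by norm_num) (by norm_num)
            rw [h2ε]
        _ = L ^ n := by
            rw [show D + n + 1 = (D + 1) + n by omega, pow_add L (D+1) n, ← mul_assoc,
              ENNReal.inv_mul_cancel (hpow0 (D+1)) (hpowtop (D+1)), one_mul]
    -- fire stays in balls
    have hball : ∀ n, burnSet T X₀ st n ⊆ ball T r (R + n) := by
      intro n
      induction n with
      | zero => intro v hv; exact hR v hv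
      | succ n ih =>
        intro v hv
        rcases hv with hv | ⟨-, u, hu, hadj⟩
        · have := ih hv
          simp only [ball, Set.mem_setOf_eq] at this ⊢
          omega
        · have h1 := ih hu
          simp only [ball, Set.mem_setOf_eq] at h1 ⊢
          have := adj_dist_le T hc (r := r) hadj
          omega
    -- protected vertices: endpoints of cut edges get protected in time
    have hprotect : ∀ n v, T.dist r v ≤ D + n → D ≤ T.dist r v →
        (∃ e ∈ Cut, v ∈ e) → v ∈ protSet st (n + 1) := by
      intro n v hub hlb he
      set m : ℕ := T.dist r v - D with hm
      have hvm : v ∈ st m := ⟨by omega, he⟩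
      have h1 : st m ⊆ protSet st (m + 1) := Set.subset_union_right
      exact protSet_mono st (show m + 1 ≤ n + 1 by omega) (h1 hvm)
    -- fire stays in the finite component
    set K : Set V := {v | (T.deleteEdges Cut).Reachable r v} with hKdef
    have hX₀K : X₀ ⊆ K := by
      intro v hv
      refine reach_del T hc r Cut (D + 1) (fun e he => by have := hfar e he; omega) v ?_
      have := hR v hv; omega
    have hburnK : ∀ n, burnSet T X₀ st n ⊆ K := by
      intro n
      induction n with
      | zero => exact hX₀K
      | succ n ih =>
        intro v hv
        rcases hv with hv | ⟨hnp, u, hu, hadj⟩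
        · exact ih hv
        · by_cases hcut : s(u, v) ∈ Cut
          · exfalso
            apply hnp
            have hve : v ∈ (s(u, v) : Sym2 V) := by simp
            have hedge : s(u, v) ∈ T.edgeSet := hCut.1 hcut
            have hd1 := (edgeDist_le_of_mem T hc r hedge hve).1
            have hd2 := (edgeDist_le_of_mem T hc r hedge hve).2
            have hfar' := hfar _ hcut
            have hub : T.dist r v ≤ D + n := by
              have h1 := hball n hu
              simp only [ball, Set.mem_setOf_eq] at h1
              have := adj_dist_le T hc (r := r) hadj
              omega
            exact hprotect n v hub (by omega) ⟨s(u, v), hcut, hve⟩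
          · have h1 : (T.deleteEdges Cut).Adj u v := SimpleGraph.deleteEdges_adj.2 ⟨hadj, hcut⟩
            exact (ih hu).trans h1.reachable
    refine ⟨st, fun n => ⟨hstfin n, ?_, ?_⟩, ?_⟩
    · -- budget
      have h1 : ((st n).ncard : ℝ≥0∞) ≤ ENNReal.ofReal (lam ^ n) := by
        rw [ENNReal.ofReal_pow hlam0]; exact hstcard n
      rw [← ENNReal.ofReal_natCast] at h1
      have h2 : ((st n).ncard : ℝ) ≤ lam ^ n :=
        (ENNReal.ofReal_le_ofReal_iff (by positivity)).1 h1
      have h3 : ((st n).ncard : ℝ) ≤ lam ^ (n + 1) :=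
        h2.trans (pow_le_pow_right₀ hlam1.le (by omega))
      exact Nat.le_floor h3
    · -- disjoint from burning
      rw [Set.disjoint_left]
      intro v hv hvb
      have h1 := hball n hvb
      simp only [ball, Set.mem_setOf_eq] at h1
      have h2 : T.dist r v = D + n := hv.1
      omega
    · exact Set.Finite.subset hCut.2 (Set.iUnion_subset hburnK)
  refine ⟨main, ?_⟩
  by_cases hbr : branchingNumber T r = ⊤
  · rw [hbr]; exact le_top
  apply le_of_forall_gt_imp_ge_of_dense
  intro x hx
  apply sInf_le
  have hy1 : branchingNumber T r < min x (branchingNumber T r + 1) :=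
    lt_min hx (ENNReal.lt_add_right hbr one_ne_zero)
  have hytop : min x (branchingNumber T r + 1) ≠ ⊤ :=
    ne_top_of_le_ne_top (ENNReal.add_ne_top.2 ⟨hbr, ENNReal.one_ne_top⟩) (min_le_right _ _)
  have hofy : ENNReal.ofReal (min x (branchingNumber T r + 1)).toReal
      = min x (branchingNumber T r + 1) := ENNReal.ofReal_toReal hytop
  have hlam0 : (0:ℝ) ≤ (min x (branchingNumber T r + 1)).toReal := ENNReal.toReal_nonneg
  refine ⟨fun n => ⌊(min x (branchingNumber T r + 1)).toReal ^ n⌋₊, ⟨1, fun n => ?_⟩,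
    main _ (by rw [hofy]; exact hy1)⟩
  calc ((⌊(min x (branchingNumber T r + 1)).toReal ^ n⌋₊ : ℕ) : ℝ≥0∞)
      = ENNReal.ofReal (⌊(min x (branchingNumber T r + 1)).toReal ^ n⌋₊ : ℝ) :=
        (ENNReal.ofReal_natCast _).symm
    _ ≤ ENNReal.ofReal ((min x (branchingNumber T r + 1)).toReal ^ n) :=
        ENNReal.ofReal_le_ofReal (Nat.floor_le (by positivity))
    _ = (ENNReal.ofReal (min x (branchingNumber T r + 1)).toReal) ^ n :=
        ENNReal.ofReal_pow hlam0 n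
    _ = (min x (branchingNumber T r + 1)) ^ n := by rw [hofy]
    _ ≤ x ^ n := pow_le_pow_left' (min_le_left _ _) n
    _ = ((1 : ℝ≥0) : ℝ≥0∞) * x ^ n := by rw [ENNReal.coe_one, one_mul]
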